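/- Let S be a measurable space, A a nonempty finite set, P a Markov kernel from S × A to S, and r : S × A → [0, 1] a measurable reward function; for a bounded measurable f : S → ℝ write [Pf](s,a) = ∫_S f(s') P(ds' | s, a). Suppose there exist a constant J* ∈ ℝ and a bounded measurable function v* : S → ℝ satisfying the average-reward Bellman optimality equation J* + v*(s) = max_{a∈A} ( r(s,a) + [Pv*](s,a) ) for all s ∈ S. Let γ ∈ [0, 1) and suppose V : S → ℝ is a bounded measurable function satisfying the discounted Bellman optimality equation V(s) = max_{a∈A} ( r(s,a) + γ[PV](s,a) ) for all s ∈ S. Then sp(V) ≤ 2·sp(v*), where sp(f) = sup_{s} f(s) − inf_{s} f(s). -/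

import Mathlib

open MeasureTheory ProbabilityTheory Finset

/-- Span bound (Lemma 2(i) of Wei et al. 2020): if `(J*, v*)` solves the average-reward
Bellman optimality equation `J* + v*(s) = max_a (r(s,a) + [Pv*](s,a))` and `V` solves the
`γ`-discounted Bellman optimality equation `V(s) = max_a (r(s,a) + γ[PV](s,a))` for a
Markov kernel `P` and rewards `r ∈ [0,1]`, then `sp(V) ≤ 2·sp(v*)`, where
`sp(f) = sup_s f(s) − inf_s f(s)`. -/
theorem stmt_12 {S A : Type*} [MeasurableSpace S] [Nonempty S]
    [MeasurableSpace A] [Fintype A] [Nonempty A]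
    (P : Kernel (S × A) S) [IsMarkovKernel P]
    (r : S → A → ℝ) (hr : ∀ s a, r s a ∈ Set.Icc (0 : ℝ) 1)
    (hrm : Measurable fun p : S × A => r p.1 p.2)
    (J : ℝ) (v : S → ℝ) (hv : Measurable v) (Cv : ℝ) (hvb : ∀ s, |v s| ≤ Cv)
    (hbell : ∀ s, J + v s = Finset.univ.sup' Finset.univ_nonempty
      (fun a => r s a + ∫ s', v s' ∂(P (s, a))))
    (γ : ℝ) (hγ : γ ∈ Set.Ico (0 : ℝ) 1)
    (V : S → ℝ) (hV : Measurable V) (CV : ℝ) (hVb : ∀ s, |V s| ≤ CV)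
    (hbellV : ∀ s, V s = Finset.univ.sup' Finset.univ_nonempty
      (fun a => r s a + γ * ∫ s', V s' ∂(P (s, a)))) :
    (⨆ s, V s) - (⨅ s, V s) ≤ 2 * ((⨆ s, v s) - (⨅ s, v s)) := by
  have hγ1 : (0:ℝ) < 1 - γ := by linarith [hγ.2]
  set c : ℝ := J / (1 - γ) with hc
  have hJc : J = (1 - γ) * c := by rw [hc]; field_simp [hγ1.ne']
  set f : S → ℝ := fun s => V s - v s - c with hf
  -- boundedness facts
  have hCf : ∀ s, |f s| ≤ CV + Cv + |c| := by
    intro s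
    have h1 := abs_le.mp (hVb s)
    have h2 := abs_le.mp (hvb s)
    have h3 : -|c| ≤ c := neg_abs_le c
    have h4 : c ≤ |c| := le_abs_self c
    rw [abs_le]
    constructor <;> simp only [hf] <;> linarith
  have hfm : Measurable f := (hV.sub hv).sub measurable_const
  have hbaV : BddAbove (Set.range V) := ⟨CV, by rintro _ ⟨s, rfl⟩; exact (abs_le.mp (hVb s)).2⟩
  have hbbV : BddBelow (Set.range V) := ⟨-CV, by rintro _ ⟨s, rfl⟩; exact (abs_le.mp (hVb s)).1⟩
  have hbav : BddAbove (Set.range v) := ⟨Cv, by rintro _ ⟨s, rfl⟩; exact (abs_le.mp (hvb s)).2⟩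
  have hbbv : BddBelow (Set.range v) := ⟨-Cv, by rintro _ ⟨s, rfl⟩; exact (abs_le.mp (hvb s)).1⟩
  have hbaf : BddAbove (Set.range f) :=
    ⟨CV + Cv + |c|, by rintro _ ⟨s, rfl⟩; exact (abs_le.mp (hCf s)).2⟩
  have hbbf : BddBelow (Set.range f) :=
    ⟨-(CV + Cv + |c|), by rintro _ ⟨s, rfl⟩; exact (abs_le.mp (hCf s)).1⟩
  set M : ℝ := ⨆ s, v s with hM
  set m : ℝ := ⨅ s, v s with hm
  set Sf : ℝ := ⨆ s, f s with hSf
  set If : ℝ := ⨅ s, f s with hIf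
  -- integrability
  have hint : ∀ (g : S → ℝ), Measurable g → ∀ (C : ℝ), (∀ s, |g s| ≤ C) →
      ∀ p : S × A, Integrable g (P p) := by
    intro g hg C hgb p
    refine (integrable_const C).mono' hg.aestronglyMeasurable (ae_of_all _ ?_)
    intro s; simpa [Real.norm_eq_abs] using hgb s
  have hintV := hint V hV CV hVb
  have hintv := hint v hv Cv hvb
  have hintf := hint f hfm (CV + Cv + |c|) hCf
  -- integral bounds
  have hintub : ∀ (g : S → ℝ), (∀ p : S × A, Integrable g (P p)) → BddAbove (Set.range g) →
      ∀ p : S × A, ∫ s', g s' ∂(P p) ≤ ⨆ s, g s := by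
    intro g hg hb p
    calc ∫ s', g s' ∂(P p) ≤ ∫ _s', (⨆ s, g s) ∂(P p) :=
          integral_mono (hg p) (integrable_const _) (fun s => le_ciSup hb s)
      _ = ⨆ s, g s := by simp
  have hintlb : ∀ (g : S → ℝ), (∀ p : S × A, Integrable g (P p)) → BddBelow (Set.range g) →
      ∀ p : S × A, ⨅ s, g s ≤ ∫ s', g s' ∂(P p) := by
    intro g hg hb p
    calc (⨅ s, g s) = ∫ _s', (⨅ s, g s) ∂(P p) := by simp
      _ ≤ ∫ s', g s' ∂(P p) :=
          integral_mono (integrable_const _) (hg p) (fun s => ciInf_le hb s)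
  -- key identity for integrals of f
  have hintfeq : ∀ p : S × A, ∫ s', f s' ∂(P p) =
      (∫ s', V s' ∂(P p)) - (∫ s', v s' ∂(P p)) - c := by
    intro p
    have hVv : Integrable (fun s' => V s' - v s') (P p) := (hintV p).sub (hintv p)
    simp only [hf]
    rw [integral_sub hVv (integrable_const c), integral_sub (hintV p) (hintv p)]
    simp
  -- upper bound: Sf ≤ -m
  have hSfle : Sf ≤ -m := by
    have hstep : ∀ s, f s ≤ γ * Sf - (1 - γ) * m := by
      intro s
      obtain ⟨a, -, ha⟩ := Finset.exists_mem_eq_sup' Finset.univ_nonempty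
        (fun a => r s a + γ * ∫ s', V s' ∂(P (s, a)))
      have hVs : V s = r s a + γ * ∫ s', V s' ∂(P (s, a)) := by rw [hbellV s, ha]
      have hvs : r s a + ∫ s', v s' ∂(P (s, a)) ≤ J + v s := by
        rw [hbell s]; exact Finset.le_sup' (fun a => r s a + ∫ s', v s' ∂(P (s, a))) (Finset.mem_univ a)
      have h1 : ∫ s', f s' ∂(P (s, a)) ≤ Sf := hintub f hintf hbaf _
      have h2 : m ≤ ∫ s', v s' ∂(P (s, a)) := hintlb v hintv hbbv _
      have h3 := hintfeq (s, a)
      have hγ0 := hγ.1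
      simp only [hf]
      nlinarith [mul_le_mul_of_nonneg_left h1 hγ0, mul_le_mul_of_nonneg_left h2 hγ1.le]
    have : Sf ≤ γ * Sf - (1 - γ) * m := ciSup_le hstep
    nlinarith
  -- lower bound: -M ≤ If
  have hIfge : -M ≤ If := by
    have hstep : ∀ s, γ * If - (1 - γ) * M ≤ f s := by
      intro s
      obtain ⟨a, -, ha⟩ := Finset.exists_mem_eq_sup' Finset.univ_nonempty
        (fun a => r s a + ∫ s', v s' ∂(P (s, a)))
      have hvs : J + v s = r s a + ∫ s', v s' ∂(P (s, a)) := by rw [hbell s, ha]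
      have hVs : r s a + γ * ∫ s', V s' ∂(P (s, a)) ≤ V s := by
        rw [hbellV s]; exact Finset.le_sup' (fun a => r s a + γ * ∫ s', V s' ∂(P (s, a))) (Finset.mem_univ a)
      have h1 : If ≤ ∫ s', f s' ∂(P (s, a)) := hintlb f hintf hbbf _
      have h2 : ∫ s', v s' ∂(P (s, a)) ≤ M := hintub v hintv hbav _
      have h3 := hintfeq (s, a)
      have hγ0 := hγ.1
      simp only [hf]
      nlinarith [mul_le_mul_of_nonneg_left h1 hγ0, mul_le_mul_of_nonneg_left h2 hγ1.le]
    have : γ * If - (1 - γ) * M ≤ If := le_ciInf hstep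
    nlinarith
  have hmM : m ≤ M := by
    obtain ⟨s⟩ := ‹Nonempty S›
    exact le_trans (ciInf_le hbbv s) (le_ciSup hbav s)
  have hsupV : (⨆ s, V s) ≤ M - m + c := by
    refine ciSup_le fun s => ?_
    have h1 : f s ≤ Sf := le_ciSup hbaf s
    have h2 : v s ≤ M := le_ciSup hbav s
    have : V s = f s + v s + c := by simp only [hf]; ring
    linarith
  have hinfV : m - M + c ≤ ⨅ s, V s := by
    refine le_ciInf fun s => ?_
    have h1 : If ≤ f s := ciInf_le hbbf s
    have h2 : m ≤ v s := ciInf_le hbbv s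
    have : V s = f s + v s + c := by simp only [hf]; ring
    linarith
  linarith
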